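/- If f is a computable sub-linear order, then f* is computable; if f is an upper semicomputable sub-linear order, then f* is upper semicomputable. -/

import Mathlib

open Set Filter

namespace KC

/-- Length of the binary string identified with the natural number `n`. -/
def len (n : ℕ) : ℕ := Nat.log 2 (n + 1)

/-- Complexity of `x` relative to machine `T`. -/
noncomputable def MachineCplx (T : ℕ →. ℕ) (x : ℕ) : ℕ := sInf {n | ∃ y, len y = n ∧ x ∈ T y}

/-- `U` is an optimal machine. -/
def Optimal (U : ℕ →. ℕ) : Prop :=
  Partrec U ∧ ∀ T : ℕ →. ℕ, Partrec T → ∃ c, ∀ x y, x ∈ T y → MachineCplx U x ≤ len y + c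

/-- Conditional complexity of `x` given `y` relative to machine `T`. -/
noncomputable def CondCplx (T : ℕ →. ℕ) (x y : ℕ) : ℕ :=
  sInf {n | ∃ z, len z = n ∧ x ∈ T (Nat.pair z y)}

/-- `U` is optimal as a conditional machine. -/
def CondOptimal (U : ℕ →. ℕ) : Prop :=
  Partrec U ∧ ∀ T : ℕ →. ℕ, Partrec T →
    ∃ c, ∀ x y z, x ∈ T (Nat.pair z y) → CondCplx U x y ≤ len z + c

/-- `y` is a prefix of `z` (as binary strings identified with naturals). -/
def IsPrefix (y z : ℕ) : Prop := ∃ k, (y + 1) * 2 ^ k ≤ z + 1 ∧ z + 1 < (y + 2) * 2 ^ k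

/-- A machine with prefix-free domain. -/
def PrefixFree (T : ℕ →. ℕ) : Prop :=
  ∀ y z, (T y).Dom → (T z).Dom → IsPrefix y z → y = z

/-- `U` is an optimal prefix-free machine. -/
def PrefixOptimal (U : ℕ →. ℕ) : Prop :=
  Partrec U ∧ PrefixFree U ∧ ∀ T : ℕ →. ℕ, Partrec T → PrefixFree T →
    ∃ c, ∀ x y, x ∈ T y → MachineCplx U x ≤ len y + c

/-- Upper semicomputability: `A` is a pointwise limit of a computable
nonincreasing sequence of approximations. -/
def UpperSemicomputable (A : ℕ → ℕ) : Prop :=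
  ∃ F : ℕ → ℕ → ℕ, Computable₂ F ∧ (∀ x, Antitone (F x)) ∧ ∀ x, A x = ⨅ s, F x s

/-- Uniform upper semicomputability for a two-argument function. -/
def UpperSemicomputable₂ (B : ℕ → ℕ → ℕ) : Prop :=
  UpperSemicomputable (fun p => B (Nat.unpair p).1 (Nat.unpair p).2)

/-- Solovay's function `α` built from a complexity function `K`. -/
noncomputable def solovay (K : ℕ → ℕ) (n : ℕ) : ℕ := sInf {m | ∃ i, n < i ∧ K i = m}

/-- An order: total, non-decreasing, unbounded. -/
def IsOrder (h : ℕ → ℕ) : Prop := Monotone h ∧ ∀ m, ∃ n, m ≤ h n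

/-- Sub-linearity: `f n = o(n)`. -/
def Sublinear (f : ℕ → ℕ) : Prop :=
  Tendsto (fun n => (f n : ℝ) / n) atTop (nhds 0)

/-- `p_f = max {n | f n ≥ n}`. -/
noncomputable def pstar (f : ℕ → ℕ) : ℕ := sSup {n | n ≤ f n}

/-- The star-operator: `f* n = min {k | f^[k] n ≤ p_f}`. -/
noncomputable def starOp (f : ℕ → ℕ) (n : ℕ) : ℕ := sInf {k | f^[k] n ≤ pstar f}

end KC

namespace StarAux

open KC

/-- stopped step map -/
def stp (h : ℕ → ℕ) (p x : ℕ) : ℕ := if x ≤ p then x else h x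

lemma stp_of_le {h : ℕ → ℕ} {p x : ℕ} (hx : x ≤ p) : stp h p x = x := if_pos hx

lemma stp_of_gt {h : ℕ → ℕ} {p x : ℕ} (hx : p < x) : stp h p x = h x :=
  if_neg (Nat.not_le.2 hx)

lemma iter_closed {h : ℕ → ℕ} {p n : ℕ} {k k' : ℕ} (hkk : k ≤ k')
    (hk : (stp h p)^[k] n ≤ p) : (stp h p)^[k'] n ≤ p := by
  induction k' , hkk using Nat.le_induction with
  | base => exact hk
  | succ m hm ih =>
    rw [Function.iterate_succ_apply', stp_of_le ih]; exact ih

/-- combined iterate/count recursion -/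
def jr (h : ℕ → ℕ) (p n m : ℕ) : ℕ × ℕ :=
  Nat.rec (n, 0) (fun _ q => (stp h p q.1, q.2 + if q.1 ≤ p then 0 else 1)) m

lemma jr_succ (h : ℕ → ℕ) (p n m : ℕ) :
    jr h p n (m+1) = (stp h p (jr h p n m).1,
      (jr h p n m).2 + if (jr h p n m).1 ≤ p then 0 else 1) := rfl

lemma jr_fst (h : ℕ → ℕ) (p n : ℕ) : ∀ m, (jr h p n m).1 = (stp h p)^[m] n := by
  intro m
  induction m with
  | zero => rfl
  | succ m ih => rw [jr_succ, Function.iterate_succ_apply', ih]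

lemma jr_snd_spec (h : ℕ → ℕ) (p n : ℕ) : ∀ m,
    ((stp h p)^[m] n ≤ p →
      ((stp h p)^[(jr h p n m).2] n ≤ p ∧ ∀ k < (jr h p n m).2, ¬ (stp h p)^[k] n ≤ p)) ∧
    (¬ (stp h p)^[m] n ≤ p → (jr h p n m).2 = m) := by
  intro m
  induction m with
  | zero =>
    constructor
    · intro h0; exact ⟨h0, fun k hk => absurd hk (Nat.not_lt_zero k)⟩
    · intro _; rfl
  | succ m ih =>
    by_cases hm : (stp h p)^[m] n ≤ p
    · have hm1 : (stp h p)^[m+1] n ≤ p := iter_closed (Nat.le_succ m) hm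
      have h2 : (jr h p n (m+1)).2 = (jr h p n m).2 := by
        rw [jr_succ, jr_fst]; simp [hm]
      constructor
      · intro _; rw [h2]; exact ih.1 hm
      · intro hc; exact absurd hm1 hc
    · have h2 : (jr h p n (m+1)).2 = m + 1 := by
        rw [jr_succ, jr_fst]; simp [hm, ih.2 hm]
      constructor
      · intro hm1
        rw [h2]
        refine ⟨hm1, fun k hk hkle => ?_⟩
        exact hm (iter_closed (Nat.lt_succ_iff.mp hk) hkle)
      · intro _; exact h2

section OrderFacts

variable {f : ℕ → ℕ}

lemma eventually_lt (hs : Sublinear f) : ∃ N, ∀ n, N ≤ n → f n < n := by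
  have h := hs.eventually_lt_const (by norm_num : (0:ℝ) < 1)
  rw [eventually_atTop] at h
  obtain ⟨N, hN⟩ := h
  refine ⟨max N 1, fun n hn => ?_⟩
  have h1 : 1 ≤ n := le_trans (le_max_right _ _) hn
  have h2 := hN n (le_trans (le_max_left _ _) hn)
  have hn0 : (0:ℝ) < n := by exact_mod_cast h1
  have : (f n : ℝ) < n := (div_lt_one hn0).mp h2
  exact_mod_cast this

lemma pstar_gt (hs : Sublinear f) : ∀ x, pstar f < x → f x < x := by
  obtain ⟨N, hN⟩ := eventually_lt hs
  have hbdd : BddAbove {n | n ≤ f n} := by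
    refine ⟨N, fun n hn => ?_⟩
    by_contra hc
    exact absurd hn (Nat.not_le.2 (hN n (le_of_not_ge hc)))
  intro x hx
  by_contra hc
  have hx2 : x ∈ {n | n ≤ f n} := le_of_not_gt hc
  exact absurd (le_csSup hbdd hx2) (Nat.not_le.2 hx)

lemma exists_iter_le (hgt : ∀ x, pstar f < x → f x < x) :
    ∀ n, ∃ k, f^[k] n ≤ pstar f := by
  intro n
  induction n using Nat.strong_induction_on with
  | _ n ih =>
    by_cases hn : n ≤ pstar f
    · exact ⟨0, hn⟩
    · obtain ⟨k, hk⟩ := ih (f n) (hgt n (Nat.not_le.1 hn))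
      exact ⟨k + 1, by rw [Function.iterate_succ_apply]; exact hk⟩

variable (hgt : ∀ x, pstar f < x → f x < x)
include hgt

lemma starOp_mem (n : ℕ) : f^[starOp f n] n ≤ pstar f :=
  Nat.sInf_mem (exists_iter_le hgt n)

omit hgt in
lemma starOp_min {n k : ℕ} (hk : k < starOp f n) : ¬ f^[k] n ≤ pstar f :=
  Nat.notMem_of_lt_sInf (s := {k | f^[k] n ≤ pstar f}) hk

omit hgt in
lemma stp_iter_eq (n : ℕ) : ∀ k, k ≤ starOp f n →
    (stp f (pstar f))^[k] n = f^[k] n := by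
  intro k
  induction k with
  | zero => intro _; rfl
  | succ k ih =>
    intro hk
    have hk' : k < starOp f n := hk
    rw [Function.iterate_succ_apply', Function.iterate_succ_apply',
      ih (le_of_lt hk'), stp_of_gt (Nat.not_le.1 (starOp_min hk'))]

lemma stp_iter_le_iff (n k : ℕ) :
    (stp f (pstar f))^[k] n ≤ pstar f ↔ starOp f n ≤ k := by
  constructor
  · intro hle
    by_contra hc
    have hk : k < starOp f n := Nat.not_le.1 hc
    rw [stp_iter_eq n k (le_of_lt hk)] at hle
    exact starOp_min hk hle
  · intro hk
    refine iter_closed hk ?_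
    rw [stp_iter_eq n _ le_rfl]
    exact starOp_mem hgt n

lemma iter_le_sub (n : ℕ) : ∀ k, k ≤ starOp f n → f^[k] n ≤ n - k := by
  intro k
  induction k with
  | zero => intro _; simp
  | succ k ih =>
    intro hk
    have hk' : k < starOp f n := hk
    have h1 : pstar f < f^[k] n := Nat.not_le.1 (starOp_min hk')
    have h2 : f^[k+1] n < f^[k] n := by
      rw [Function.iterate_succ_apply']
      exact hgt _ h1
    have h3 := ih (le_of_lt hk')
    omega

lemma starOp_le_self (n : ℕ) : starOp f n ≤ n := by
  by_contra hc
  have hn : n < starOp f n := Nat.not_le.1 hc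
  have h1 := iter_le_sub hgt n n (le_of_lt hn)
  have h2 : pstar f < f^[n] n := Nat.not_le.1 (starOp_min hn)
  omega

lemma starOp_eq_jr (n : ℕ) : starOp f n = (jr f (pstar f) n n).2 := by
  have hfound : (stp f (pstar f))^[n] n ≤ pstar f :=
    (stp_iter_le_iff hgt n n).2 (starOp_le_self hgt n)
  obtain ⟨hmem, hmin⟩ := (jr_snd_spec f (pstar f) n n).1 hfound
  refine le_antisymm ((stp_iter_le_iff hgt n _).1 hmem) ?_
  by_contra hc
  exact hmin _ (Nat.not_le.1 hc) ((stp_iter_le_iff hgt n _).2 le_rfl)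

end OrderFacts

lemma jr_eq_brec (f : ℕ → ℕ) (p n : ℕ) : ∀ m, jr f p n m =
    Nat.rec (motive := fun _ => ℕ × ℕ) (n, 0) (fun _ q =>
      ((bif decide (q.1 ≤ p) then q.1 else f q.1,
        q.2 + bif decide (q.1 ≤ p) then 0 else 1) : ℕ × ℕ)) m := by
  have step_eq : ∀ q : ℕ × ℕ,
      ((stp f p q.1, q.2 + if q.1 ≤ p then 0 else 1) : ℕ × ℕ) =
      ((bif decide (q.1 ≤ p) then q.1 else f q.1,
        q.2 + bif decide (q.1 ≤ p) then 0 else 1) : ℕ × ℕ) := by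
    intro q
    by_cases hq : q.1 ≤ p <;> simp [stp, hq]
  intro m
  induction m with
  | zero => rfl
  | succ m ih =>
    rw [jr_succ, ih]
    exact step_eq _

lemma jr_computable {f : ℕ → ℕ} (hcf : Computable f) (p : ℕ) :
    Computable fun n => (jr f p n n).2 := by
  have hdec : Computable₂ fun x y : ℕ => decide (x ≤ y) := Primrec.nat_le.decide.to_comp
  have pr1 : Computable fun w : ℕ × (ℕ × (ℕ × ℕ)) => w.2.2.1 :=
    Computable.fst.comp (Computable.snd.comp Computable.snd)
  have hc : Computable fun w : ℕ × (ℕ × (ℕ × ℕ)) => decide (w.2.2.1 ≤ p) :=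
    hdec.comp pr1 (Computable.const p)
  have comp1 : Computable fun w : ℕ × (ℕ × (ℕ × ℕ)) =>
      bif decide (w.2.2.1 ≤ p) then w.2.2.1 else f w.2.2.1 :=
    Computable.cond hc pr1 (hcf.comp pr1)
  have comp2 : Computable fun w : ℕ × (ℕ × (ℕ × ℕ)) =>
      (w.2.2.2 + bif decide (w.2.2.1 ≤ p) then 0 else 1) :=
    (Primrec.nat_add.comp (Primrec.snd.comp (Primrec.snd.comp Primrec.snd))
      (Primrec.cond
        (Primrec.nat_le.comp (Primrec.fst.comp (Primrec.snd.comp Primrec.snd))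
          (Primrec.const p)).decide
        (Primrec.const 0) (Primrec.const 1))).to_comp
  have hrec := Computable.nat_rec (f := fun n : ℕ => n)
    (g := fun n : ℕ => ((n, 0) : ℕ × ℕ))
    (h := fun (_ : ℕ) (w : ℕ × (ℕ × ℕ)) =>
      ((bif decide (w.2.1 ≤ p) then w.2.1 else f w.2.1,
        w.2.2 + bif decide (w.2.1 ≤ p) then 0 else 1) : ℕ × ℕ))
    Computable.id (Computable.id.pair (Computable.const 0)) (comp1.pair comp2)
  refine (Computable.snd.comp hrec).of_eq fun n => ?_
  exact congrArg Prod.snd (jr_eq_brec f p n n).symm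

section Part2

/-- Running maximum of `F · t` up to `x`. -/
def gm (F : ℕ → ℕ → ℕ) (t x : ℕ) : ℕ :=
  Nat.rec (F 0 t) (fun y ih => max ih (F (y+1) t)) x

lemma gm_succ (F : ℕ → ℕ → ℕ) (t x : ℕ) :
    gm F t (x+1) = max (gm F t x) (F (x+1) t) := rfl

lemma gm_mono (F : ℕ → ℕ → ℕ) (t : ℕ) : Monotone (gm F t) :=
  monotone_nat_of_le_succ fun _ => le_max_left _ _

lemma le_gm (F : ℕ → ℕ → ℕ) (t x : ℕ) : F x t ≤ gm F t x := by
  cases x with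
  | zero => exact le_rfl
  | succ x => exact le_max_right _ _

variable {F : ℕ → ℕ → ℕ} {f : ℕ → ℕ}

lemma f_le_F (hFinf : ∀ x, f x = ⨅ s, F x s) (x t : ℕ) : f x ≤ F x t := by
  rw [hFinf]; exact ciInf_le' _ t

lemma f_le_gm (hFinf : ∀ x, f x = ⨅ s, F x s) (t x : ℕ) : f x ≤ gm F t x :=
  (f_le_F hFinf x t).trans (le_gm F t x)

lemma stabilize_one (hFanti : ∀ x, Antitone (F x)) (hFinf : ∀ x, f x = ⨅ s, F x s)
    (y : ℕ) : ∃ s₀, ∀ t, s₀ ≤ t → F y t = f y := by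
  have hne : (Set.range (F y)).Nonempty := ⟨F y 0, 0, rfl⟩
  obtain ⟨s₀, hs₀⟩ := Nat.sInf_mem hne
  refine ⟨s₀, fun t ht => le_antisymm ?_ ?_⟩
  · calc F y t ≤ F y s₀ := hFanti y ht
      _ = sInf (Set.range (F y)) := hs₀
      _ = f y := (hFinf y).symm
  · rw [hFinf y]; exact ciInf_le' _ t

lemma stabilize (hFanti : ∀ x, Antitone (F x)) (hFinf : ∀ x, f x = ⨅ s, F x s)
    (n : ℕ) : ∃ s₀, ∀ t, s₀ ≤ t → ∀ y, y ≤ n → F y t = f y := by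
  induction n with
  | zero =>
    obtain ⟨s₀, h⟩ := stabilize_one hFanti hFinf 0
    exact ⟨s₀, fun t ht y hy => by rw [Nat.le_zero.1 hy]; exact h t ht⟩
  | succ n ih =>
    obtain ⟨s₁, h1⟩ := ih
    obtain ⟨s₂, h2⟩ := stabilize_one hFanti hFinf (n+1)
    refine ⟨max s₁ s₂, fun t ht y hy => ?_⟩
    by_cases hy' : y ≤ n
    · exact h1 t (le_trans (le_max_left _ _) ht) y hy'
    · have : y = n + 1 := by omega
      rw [this]
      exact h2 t (le_trans (le_max_right _ _) ht)

lemma gm_eq_f (hmono : Monotone f) {t x : ℕ} (hFt : ∀ y, y ≤ x → F y t = f y) :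
    gm F t x = f x := by
  induction x with
  | zero => exact hFt 0 le_rfl
  | succ x ih =>
    rw [gm_succ, ih (fun y hy => hFt y (hy.trans (Nat.le_succ x))),
      hFt (x+1) le_rfl]
    exact max_eq_right (hmono (Nat.le_succ x))

lemma Gapp_anti' (hFanti : ∀ x, Antitone (F x)) (x : ℕ) :
    Antitone fun t => gm F t x := by
  induction x with
  | zero => exact hFanti 0
  | succ x ih => exact fun s t hst => max_le_max (ih hst) (hFanti (x+1) hst)

lemma stp_dom {g : ℕ → ℕ} (hfg : ∀ x, f x ≤ g x) (hg : Monotone g) (p n : ℕ) :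
    ∀ k, (stp f p)^[k] n ≤ (stp g p)^[k] n ∨ (stp f p)^[k] n ≤ p := by
  intro k
  induction k with
  | zero => exact Or.inl le_rfl
  | succ k ih =>
    by_cases hk : (stp f p)^[k] n ≤ p
    · exact Or.inr (iter_closed (Nat.le_succ k) hk)
    · cases ih with
      | inr h => exact absurd h hk
      | inl h =>
        left
        rw [Function.iterate_succ_apply', Function.iterate_succ_apply']
        have hfk : p < (stp f p)^[k] n := Nat.not_le.1 hk
        have hgk : p < (stp g p)^[k] n := lt_of_lt_of_le hfk h
        rw [stp_of_gt hfk, stp_of_gt hgk]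
        exact le_trans (hfg _) (hg h)

/-- The approximation to `starOp f` at stage `t`. -/
def Happ (F : ℕ → ℕ → ℕ) (p n t : ℕ) : ℕ :=
  if (jr (gm F t) p n t).1 ≤ p then (jr (gm F t) p n t).2 else n + 1

/-- The running minimum of `Happ`. -/
def Gapp (F : ℕ → ℕ → ℕ) (p n s : ℕ) : ℕ :=
  Nat.rec (Happ F p n 0) (fun t ih => min ih (Happ F p n (t+1))) s

variable (hgt : ∀ x, pstar f < x → f x < x)
include hgt

lemma Happ_ge (hFinf : ∀ x, f x = ⨅ s, F x s) (n t : ℕ) :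
    starOp f n ≤ Happ F (pstar f) n t := by
  unfold Happ
  by_cases hfound : (jr (gm F t) (pstar f) n t).1 ≤ pstar f
  · rw [if_pos hfound]
    rw [jr_fst] at hfound
    obtain ⟨hmem, -⟩ := (jr_snd_spec (gm F t) (pstar f) n t).1 hfound
    have hd := stp_dom (f_le_gm hFinf t) (gm_mono F t) (pstar f) n
      ((jr (gm F t) (pstar f) n t).2)
    have hsf : (stp f (pstar f))^[(jr (gm F t) (pstar f) n t).2] n ≤ pstar f := by
      cases hd with
      | inl h => exact le_trans h hmem
      | inr h => exact h
    exact (stp_iter_le_iff hgt n _).1 hsf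
  · rw [if_neg hfound]
    exact le_trans (starOp_le_self hgt n) (Nat.le_succ n)

lemma stp_iter_le_self (n : ℕ) : ∀ k, (stp f (pstar f))^[k] n ≤ n := by
  intro k
  induction k with
  | zero => exact le_rfl
  | succ k ih =>
    rw [Function.iterate_succ_apply']
    by_cases hx : (stp f (pstar f))^[k] n ≤ pstar f
    · rw [stp_of_le hx]; exact ih
    · rw [stp_of_gt (Nat.not_le.1 hx)]
      exact le_trans (le_of_lt (hgt _ (Nat.not_le.1 hx))) ih

lemma stp_eq_of_agree (hmono : Monotone f) {n t : ℕ}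
    (hFt : ∀ y, y ≤ n → F y t = f y) :
    ∀ k, (stp (gm F t) (pstar f))^[k] n = (stp f (pstar f))^[k] n := by
  intro k
  induction k with
  | zero => rfl
  | succ k ih =>
    rw [Function.iterate_succ_apply', Function.iterate_succ_apply', ih]
    have hxn : (stp f (pstar f))^[k] n ≤ n := stp_iter_le_self hgt n k
    by_cases hxp : (stp f (pstar f))^[k] n ≤ pstar f
    · rw [stp_of_le hxp, stp_of_le hxp]
    · rw [stp_of_gt (Nat.not_le.1 hxp), stp_of_gt (Nat.not_le.1 hxp)]
      exact gm_eq_f hmono (fun y hy => hFt y (hy.trans hxn))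

lemma Happ_eventually (hmono : Monotone f) (hFanti : ∀ x, Antitone (F x))
    (hFinf : ∀ x, f x = ⨅ s, F x s) (n : ℕ) :
    ∃ t, Happ F (pstar f) n t = starOp f n := by
  obtain ⟨s₀, hs₀⟩ := stabilize hFanti hFinf n
  refine ⟨max s₀ (starOp f n), ?_⟩
  set t := max s₀ (starOp f n) with hT
  have hagree : ∀ y, y ≤ n → F y t = f y := hs₀ t (le_max_left _ _)
  have hiter := stp_eq_of_agree hgt hmono hagree
  have hfound : (jr (gm F t) (pstar f) n t).1 ≤ pstar f := by
    rw [jr_fst, hiter t]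
    exact (stp_iter_le_iff hgt n t).2 (le_max_right _ _)
  unfold Happ
  rw [if_pos hfound]
  rw [jr_fst] at hfound
  obtain ⟨hmem, hmin⟩ := (jr_snd_spec (gm F t) (pstar f) n t).1 hfound
  rw [hiter _] at hmem
  refine le_antisymm ?_ ((stp_iter_le_iff hgt n _).1 hmem)
  by_contra hc
  refine hmin _ (Nat.not_le.1 hc) ?_
  rw [hiter _]
  exact (stp_iter_le_iff hgt n _).2 le_rfl

omit hgt

lemma Gapp_succ (p n s : ℕ) :
    Gapp F p n (s+1) = min (Gapp F p n s) (Happ F p n (s+1)) := rfl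

lemma Gapp_anti (p n : ℕ) : Antitone (Gapp F p n) :=
  antitone_nat_of_succ_le fun _ => min_le_left _ _

include hgt in
lemma Gapp_ge (hFinf : ∀ x, f x = ⨅ s, F x s) (n s : ℕ) :
    starOp f n ≤ Gapp F (pstar f) n s := by
  induction s with
  | zero => exact Happ_ge hgt hFinf n 0
  | succ s ih => exact le_min ih (Happ_ge hgt hFinf n (s+1))

lemma Gapp_le_Happ (p n : ℕ) : ∀ s t, t ≤ s → Gapp F p n s ≤ Happ F p n t := by
  intro s
  induction s with
  | zero => intro t ht; rw [Nat.le_zero.1 ht]; exact le_rfl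
  | succ s ih =>
    intro t ht
    by_cases ht' : t ≤ s
    · exact le_trans (min_le_left _ _) (ih t ht')
    · have : t = s + 1 := by omega
      rw [this]
      exact min_le_right _ _

include hgt in
lemma starOp_eq_iInf (hmono : Monotone f) (hFanti : ∀ x, Antitone (F x))
    (hFinf : ∀ x, f x = ⨅ s, F x s) (n : ℕ) :
    starOp f n = ⨅ s, Gapp F (pstar f) n s := by
  obtain ⟨t, ht⟩ := Happ_eventually hgt hmono hFanti hFinf n
  refine le_antisymm (le_ciInf fun s => Gapp_ge hgt hFinf n s) ?_
  calc ⨅ s, Gapp F (pstar f) n s ≤ Gapp F (pstar f) n t := ciInf_le' _ t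
    _ ≤ Happ F (pstar f) n t := Gapp_le_Happ _ _ t t le_rfl
    _ = starOp f n := ht

end Part2

section Part2Comp

variable {F : ℕ → ℕ → ℕ}

lemma gm_computable (hcF : Computable₂ F) : Computable₂ (gm F) := by
  have hh : Computable fun w : (ℕ × ℕ) × (ℕ × ℕ) => max w.2.2 (F (w.2.1 + 1) w.1.1) :=
    Primrec.nat_max.to_comp.comp (Computable.snd.comp Computable.snd)
      (hcF.comp (Computable.succ.comp (Computable.fst.comp Computable.snd))
        (Computable.fst.comp Computable.fst))
  exact Computable.nat_rec (f := fun a : ℕ × ℕ => a.2)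
    (g := fun a : ℕ × ℕ => F 0 a.1)
    (h := fun (a : ℕ × ℕ) (w : ℕ × ℕ) => max w.2 (F (w.1 + 1) a.1))
    Computable.snd (hcF.comp (Computable.const 0) Computable.fst) hh

lemma Happ_computable (hcF : Computable₂ F) (p : ℕ) : Computable₂ (Happ F p) := by
  have hgm := gm_computable hcF
  have hdec : Computable₂ fun x y : ℕ => decide (x ≤ y) := Primrec.nat_le.decide.to_comp
  have pr1 : Computable fun w : (ℕ × ℕ) × (ℕ × (ℕ × ℕ)) => w.2.2.1 :=
    Computable.fst.comp (Computable.snd.comp Computable.snd)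
  have hc : Computable fun w : (ℕ × ℕ) × (ℕ × (ℕ × ℕ)) => decide (w.2.2.1 ≤ p) :=
    hdec.comp pr1 (Computable.const p)
  have comp1 : Computable fun w : (ℕ × ℕ) × (ℕ × (ℕ × ℕ)) =>
      bif decide (w.2.2.1 ≤ p) then w.2.2.1 else gm F w.1.2 w.2.2.1 :=
    Computable.cond hc pr1 (hgm.comp (Computable.snd.comp Computable.fst) pr1)
  have comp2 : Computable fun w : (ℕ × ℕ) × (ℕ × (ℕ × ℕ)) =>
      (w.2.2.2 + bif decide (w.2.2.1 ≤ p) then 0 else 1) :=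
    (Primrec.nat_add.comp (Primrec.snd.comp (Primrec.snd.comp Primrec.snd))
      (Primrec.cond
        (Primrec.nat_le.comp (Primrec.fst.comp (Primrec.snd.comp Primrec.snd))
          (Primrec.const p)).decide
        (Primrec.const 0) (Primrec.const 1))).to_comp
  have hJ := Computable.nat_rec (f := fun a : ℕ × ℕ => a.2)
    (g := fun a : ℕ × ℕ => ((a.1, 0) : ℕ × ℕ))
    (h := fun (a : ℕ × ℕ) (w : ℕ × (ℕ × ℕ)) =>
      ((bif decide (w.2.1 ≤ p) then w.2.1 else gm F a.2 w.2.1,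
        w.2.2 + bif decide (w.2.1 ≤ p) then 0 else 1) : ℕ × ℕ))
    Computable.snd (Computable.fst.pair (Computable.const 0)) (comp1.pair comp2)
  have hJ' : Computable fun a : ℕ × ℕ => jr (gm F a.2) p a.1 a.2 :=
    hJ.of_eq fun a => (jr_eq_brec (gm F a.2) p a.1 a.2).symm
  have hcond : Computable fun a : ℕ × ℕ => decide ((jr (gm F a.2) p a.1 a.2).1 ≤ p) :=
    hdec.comp (Computable.fst.comp hJ') (Computable.const p)
  have hfin := Computable.cond hcond (Computable.snd.comp hJ')
    (Computable.succ.comp Computable.fst)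
  exact hfin.of_eq fun a => by
    by_cases hq : (jr (gm F a.2) p a.1 a.2).1 ≤ p <;> simp [Happ, hq]

lemma Gapp_computable (hcF : Computable₂ F) (p : ℕ) : Computable₂ (Gapp F p) := by
  have hH := Happ_computable hcF p
  exact Computable.nat_rec (f := fun a : ℕ × ℕ => a.2)
    (g := fun a : ℕ × ℕ => Happ F p a.1 0)
    (h := fun (a : ℕ × ℕ) (w : ℕ × ℕ) => min w.2 (Happ F p a.1 (w.1 + 1)))
    Computable.snd (hH.comp Computable.fst (Computable.const 0))
    (Primrec.nat_min.to_comp.comp (Computable.snd.comp Computable.snd)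
      (hH.comp (Computable.fst.comp Computable.fst)
        (Computable.succ.comp (Computable.fst.comp Computable.snd))))

end Part2Comp

end StarAux

open KC
/-- The star-operator preserves computability and upper semicomputability. -/
theorem starOp_computability (f : ℕ → ℕ) (hf : IsOrder f) (hs : Sublinear f) :
    (Computable f → Computable (starOp f)) ∧
    (UpperSemicomputable f → UpperSemicomputable (starOp f)) := by
  obtain ⟨hmono, -⟩ := hf
  have hgt := StarAux.pstar_gt hs
  constructor
  · intro hcf
    exact (StarAux.jr_computable hcf (pstar f)).of_eq fun n =>
      (StarAux.starOp_eq_jr hgt n).symm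
  · rintro ⟨F, hcF, hFanti, hFinf⟩
    exact ⟨StarAux.Gapp F (pstar f), StarAux.Gapp_computable hcF (pstar f),
      fun n => StarAux.Gapp_anti (pstar f) n,
      fun n => StarAux.starOp_eq_iInf hgt hmono hFanti hFinf n⟩
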